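/- Let |ψ⟩ ∈ H_A ⊗ H_B. Suppose T₁, T₂ are Hermitian operators on H_B and U₁, U₂ are unitaries on H_A such that ‖T_j|ψ⟩ − U_j|ψ⟩‖ ≤ ε for j = 1, 2 (operators extended trivially across the tensor product). Then the regularized unitary operators T̂₁, T̂₂ satisfy ‖{T̂₁, T̂₂}|ψ⟩ − {T₁, T₂}|ψ⟩‖ ≤ (6 + ‖T₁‖ + ‖T₂‖)·ε, where {A, B} = AB + BA and ‖·‖ on operators is the operator norm. -/

import Mathlib

open scoped Kronecker

/-- The regularization `T̂` of a Hermitian operator `T`: in an eigenbasis of `T`, each nonzero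
eigenvalue is replaced by its sign and each zero eigenvalue by `1`.  This agrees with the
definition `T̂ = (T + P)·|T + P|⁻¹`, where `P` is the orthogonal projection onto `ker T`. -/
noncomputable def regularize {d : ℕ} {T : Matrix (Fin d) (Fin d) ℂ} (hT : T.IsHermitian) :
    Matrix (Fin d) (Fin d) ℂ :=
  (hT.eigenvectorUnitary : Matrix (Fin d) (Fin d) ℂ) *
    Matrix.diagonal (fun i =>
      if hT.eigenvalues i = 0 then 1 else ((Real.sign (hT.eigenvalues i) : ℝ) : ℂ)) *
    star (hT.eigenvectorUnitary : Matrix (Fin d) (Fin d) ℂ)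

set_option linter.unusedSectionVars false

namespace RegAux

open Matrix

variable {n m : Type*} [Fintype n] [Fintype m] [DecidableEq n] [DecidableEq m]

lemma entry_apply (M : Matrix n m ℂ) (x : EuclideanSpace ℂ m) (i : n) :
    Matrix.toEuclideanLin M x i = ∑ j, M i j * x j := by
  simp [Matrix.toEuclideanLin_apply, Matrix.mulVec, dotProduct]

lemma mul_apply' (M N : Matrix n n ℂ) (x : EuclideanSpace ℂ n) :
    Matrix.toEuclideanLin (M * N) x = Matrix.toEuclideanLin M (Matrix.toEuclideanLin N x) := by
  simp [Matrix.toEuclideanLin_apply, Matrix.mulVec_mulVec]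

lemma one_apply' (x : EuclideanSpace ℂ n) : Matrix.toEuclideanLin (1 : Matrix n n ℂ) x = x := by
  simp [Matrix.toEuclideanLin_apply]

lemma norm_sq_eq (x : EuclideanSpace ℂ n) : ‖x‖ ^ 2 = ∑ i, ‖x i‖ ^ 2 := by
  rw [EuclideanSpace.norm_eq, Real.sq_sqrt (by positivity)]

lemma unit_norm {M : Matrix n n ℂ} (hM : M ∈ Matrix.unitaryGroup n ℂ)
    (x : EuclideanSpace ℂ n) : ‖Matrix.toEuclideanLin M x‖ = ‖x‖ := by
  have key : (inner ℂ (Matrix.toEuclideanLin M x) (Matrix.toEuclideanLin M x) : ℂ)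
      = inner ℂ x x := by
    rw [← LinearMap.adjoint_inner_right, ← Matrix.toEuclideanLin_conjTranspose_eq_adjoint,
      ← mul_apply']
    rw [show Mᴴ * M = 1 from hM.1, one_apply']
  rw [norm_eq_sqrt_re_inner (𝕜 := ℂ), norm_eq_sqrt_re_inner (𝕜 := ℂ), key]

lemma star_kron (A : Matrix n n ℂ) (B : Matrix m m ℂ) :
    star (A ⊗ₖ B) = star A ⊗ₖ star B := by
  ext ⟨i, j⟩ ⟨k, l⟩
  simp [Matrix.conjTranspose_apply, Matrix.kronecker_apply]

lemma kron_unitary {A : Matrix n n ℂ} {B : Matrix m m ℂ}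
    (hA : A ∈ Matrix.unitaryGroup n ℂ) (hB : B ∈ Matrix.unitaryGroup m ℂ) :
    A ⊗ₖ B ∈ Matrix.unitaryGroup (n × m) ℂ := by
  rw [Matrix.mem_unitaryGroup_iff']
  rw [show (star (A ⊗ₖ B) : Matrix _ _ ℂ) = Aᴴ ⊗ₖ Bᴴ from star_kron A B,
    ← Matrix.mul_kronecker_mul, show Aᴴ * A = 1 from hA.1, show Bᴴ * B = 1 from hB.1,
    Matrix.one_kronecker_one]

def colS (x : EuclideanSpace ℂ (n × m)) (b : m) : EuclideanSpace ℂ n := WithLp.toLp 2 (fun a => x (a, b))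
def rowS (x : EuclideanSpace ℂ (n × m)) (a : n) : EuclideanSpace ℂ m := WithLp.toLp 2 (fun b => x (a, b))

lemma colS_sub (x y : EuclideanSpace ℂ (n × m)) (b : m) :
    colS (x - y) b = colS x b - colS y b := by ext a; simp [colS]

lemma norm_sq_col (x : EuclideanSpace ℂ (n × m)) : ‖x‖ ^ 2 = ∑ b, ‖colS x b‖ ^ 2 := by
  simp_rw [norm_sq_eq, colS]
  rw [Fintype.sum_prod_type]
  exact Finset.sum_comm

lemma norm_sq_row (x : EuclideanSpace ℂ (n × m)) : ‖x‖ ^ 2 = ∑ a, ‖rowS x a‖ ^ 2 := by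
  simp_rw [norm_sq_eq, rowS]
  rw [Fintype.sum_prod_type]

lemma kron_one_col (U : Matrix n n ℂ) (x : EuclideanSpace ℂ (n × m)) (b : m) :
    colS (Matrix.toEuclideanLin (U ⊗ₖ (1 : Matrix m m ℂ)) x) b
      = Matrix.toEuclideanLin U (colS x b) := by
  ext a
  simp [colS, PiLp.toLp_apply, entry_apply, Fintype.sum_prod_type, Matrix.kronecker_apply, Matrix.one_apply,
    mul_ite, ite_mul, Matrix.mulVec, dotProduct]

lemma one_kron_diag_col (d : m → ℂ) (x : EuclideanSpace ℂ (n × m)) (b : m) :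
    colS (Matrix.toEuclideanLin ((1 : Matrix n n ℂ) ⊗ₖ Matrix.diagonal d) x) b
      = d b • colS x b := by
  ext a
  simp [colS, PiLp.toLp_apply, entry_apply, Fintype.sum_prod_type, Matrix.kronecker_apply, Matrix.one_apply,
    Matrix.diagonal_apply, mul_ite, ite_mul]

lemma one_kron_row (T : Matrix m m ℂ) (x : EuclideanSpace ℂ (n × m)) (a : n) :
    rowS (Matrix.toEuclideanLin ((1 : Matrix n n ℂ) ⊗ₖ T) x) a
      = Matrix.toEuclideanLin T (rowS x a) := by
  ext b
  simp [rowS, PiLp.toLp_apply, entry_apply, Fintype.sum_prod_type, Matrix.kronecker_apply, Matrix.one_apply,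
    mul_ite, ite_mul, Matrix.mulVec, dotProduct]

lemma clm_apply (T : Matrix m m ℂ) (x : EuclideanSpace ℂ m) :
    Matrix.toEuclideanCLM (𝕜 := ℂ) T x = Matrix.toEuclideanLin T x :=
  DFunLike.congr_fun (Matrix.coe_toEuclideanCLM_eq_toEuclideanLin T) x

lemma one_kron_norm_le (T : Matrix m m ℂ) (x : EuclideanSpace ℂ (n × m)) :
    ‖Matrix.toEuclideanLin ((1 : Matrix n n ℂ) ⊗ₖ T) x‖
      ≤ ‖Matrix.toEuclideanCLM (𝕜 := ℂ) T‖ * ‖x‖ := by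
  have h2 : ‖Matrix.toEuclideanLin ((1 : Matrix n n ℂ) ⊗ₖ T) x‖ ^ 2
      ≤ (‖Matrix.toEuclideanCLM (𝕜 := ℂ) T‖ * ‖x‖) ^ 2 := by
    rw [norm_sq_row, mul_pow, norm_sq_row x, Finset.mul_sum]
    apply Finset.sum_le_sum
    intro a _
    rw [one_kron_row, ← mul_pow]
    have := (Matrix.toEuclideanCLM (𝕜 := ℂ) T).le_opNorm (rowS x a)
    rw [clm_apply] at this
    exact pow_le_pow_left₀ (norm_nonneg _) this 2
  exact le_of_pow_le_pow_left₀ two_ne_zero (by positivity) h2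

lemma sign_dist (t : ℝ) : |(if t = 0 then 1 else Real.sign t) - t| = |(|t| - 1)| := by
  rcases lt_trichotomy t 0 with h | h | h
  · rw [if_neg h.ne, Real.sign_of_neg h, abs_of_neg h]
    congr 1; ring
  · subst h; simp
  · rw [if_neg h.ne', Real.sign_of_pos h, abs_of_pos h, abs_sub_comm]

lemma per_col (l s : ℝ) (hls : |s - l| = |(|l| - 1)|)
    {U : Matrix n n ℂ} (hU : U ∈ Matrix.unitaryGroup n ℂ)
    (v : EuclideanSpace ℂ n) :
    ‖((s : ℂ) - (l : ℂ)) • v‖ ≤ ‖(l : ℂ) • v - Matrix.toEuclideanLin U v‖ := by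
  have h1 : ‖((s : ℂ) - (l : ℂ)) • v‖ = |(|l| - 1)| * ‖v‖ := by
    rw [norm_smul, ← Complex.ofReal_sub, Complex.norm_real, Real.norm_eq_abs, hls]
  have h2 : |‖(l : ℂ) • v‖ - ‖Matrix.toEuclideanLin U v‖|
      ≤ ‖(l : ℂ) • v - Matrix.toEuclideanLin U v‖ := abs_norm_sub_norm_le _ _
  rw [norm_smul, Complex.norm_real, Real.norm_eq_abs, unit_norm hU] at h2
  refine le_trans (le_of_eq ?_) h2
  rw [h1, ← abs_of_nonneg (norm_nonneg v), ← abs_mul]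
  congr 1
  rw [abs_of_nonneg (norm_nonneg v)]
  ring

lemma diag_key (l s : m → ℝ) (hls : ∀ b, |s b - l b| = |(|l b| - 1)|)
    {U : Matrix n n ℂ} (hU : U ∈ Matrix.unitaryGroup n ℂ)
    (φ : EuclideanSpace ℂ (n × m)) :
    ‖Matrix.toEuclideanLin ((1 : Matrix n n ℂ) ⊗ₖ Matrix.diagonal (fun b => (s b : ℂ))) φ -
        Matrix.toEuclideanLin ((1 : Matrix n n ℂ) ⊗ₖ Matrix.diagonal (fun b => (l b : ℂ))) φ‖
      ≤ ‖Matrix.toEuclideanLin ((1 : Matrix n n ℂ) ⊗ₖ Matrix.diagonal (fun b => (l b : ℂ))) φ -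
        Matrix.toEuclideanLin (U ⊗ₖ (1 : Matrix m m ℂ)) φ‖ := by
  refine le_of_pow_le_pow_left₀ two_ne_zero (norm_nonneg _) ?_
  rw [norm_sq_col, norm_sq_col]
  apply Finset.sum_le_sum
  intro b _
  rw [colS_sub, colS_sub, one_kron_diag_col, one_kron_diag_col, kron_one_col, ← sub_smul]
  exact pow_le_pow_left₀ (norm_nonneg _) (per_col (l b) (s b) (hls b) hU (colS φ b)) 2



noncomputable def sig {d : ℕ} {T : Matrix (Fin d) (Fin d) ℂ} (hT : T.IsHermitian)
    (i : Fin d) : ℝ :=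
  if hT.eigenvalues i = 0 then 1 else Real.sign (hT.eigenvalues i)

lemma regularize_eq {d : ℕ} {T : Matrix (Fin d) (Fin d) ℂ} (hT : T.IsHermitian) :
    regularize hT = (hT.eigenvectorUnitary : Matrix (Fin d) (Fin d) ℂ) *
      Matrix.diagonal (fun i => ((sig hT i : ℝ) : ℂ)) *
      star (hT.eigenvectorUnitary : Matrix (Fin d) (Fin d) ℂ) := by
  have h : (fun i => if hT.eigenvalues i = 0 then (1 : ℂ)
      else ((Real.sign (hT.eigenvalues i) : ℝ) : ℂ)) = fun i => ((sig hT i : ℝ) : ℂ) := by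
    funext i
    unfold sig
    split <;> simp
  unfold regularize
  rw [h]

lemma sig_mul_self {d : ℕ} {T : Matrix (Fin d) (Fin d) ℂ} (hT : T.IsHermitian) (i : Fin d) :
    sig hT i * sig hT i = 1 := by
  unfold sig
  split
  · norm_num
  · rcases lt_trichotomy (hT.eigenvalues i) 0 with h | h | h
    · rw [Real.sign_of_neg h]; norm_num
    · tauto
    · rw [Real.sign_of_pos h]; norm_num

lemma diag_sig_unitary {d : ℕ} {T : Matrix (Fin d) (Fin d) ℂ} (hT : T.IsHermitian) :
    Matrix.diagonal (fun i => ((sig hT i : ℝ) : ℂ)) ∈ Matrix.unitaryGroup (Fin d) ℂ := by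
  rw [Matrix.mem_unitaryGroup_iff']
  rw [Matrix.star_eq_conjTranspose, Matrix.diagonal_conjTranspose,
    Matrix.diagonal_mul_diagonal]
  ext i j
  simp [Matrix.diagonal_apply, Matrix.one_apply, Complex.conj_ofReal, ← Complex.ofReal_mul,
    sig_mul_self hT i]

lemma regularize_unitary {d : ℕ} {T : Matrix (Fin d) (Fin d) ℂ} (hT : T.IsHermitian) :
    regularize hT ∈ Matrix.unitaryGroup (Fin d) ℂ := by
  rw [regularize_eq]
  exact mul_mem (mul_mem hT.eigenvectorUnitary.2 (diag_sig_unitary hT))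
    (Unitary.star_mem hT.eigenvectorUnitary.2)

lemma spectral' {d : ℕ} {T : Matrix (Fin d) (Fin d) ℂ} (hT : T.IsHermitian) :
    T = (hT.eigenvectorUnitary : Matrix (Fin d) (Fin d) ℂ) *
      Matrix.diagonal (fun i => ((hT.eigenvalues i : ℝ) : ℂ)) *
      star (hT.eigenvectorUnitary : Matrix (Fin d) (Fin d) ℂ) := hT.spectral_theorem



lemma conj_kron {dA dB : ℕ} (V M : Matrix (Fin dB) (Fin dB) ℂ) :
    (1 : Matrix (Fin dA) (Fin dA) ℂ) ⊗ₖ (V * M * star V)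
      = ((1 : Matrix (Fin dA) (Fin dA) ℂ) ⊗ₖ V) * ((1 : Matrix (Fin dA) (Fin dA) ℂ) ⊗ₖ M) *
        ((1 : Matrix (Fin dA) (Fin dA) ℂ) ⊗ₖ star V) := by
  rw [← Matrix.mul_kronecker_mul, ← Matrix.mul_kronecker_mul, one_mul, one_mul]

lemma comm_kron {dA dB : ℕ} (A : Matrix (Fin dB) (Fin dB) ℂ) (B : Matrix (Fin dA) (Fin dA) ℂ)
    (y : EuclideanSpace ℂ (Fin dA × Fin dB)) :
    Matrix.toEuclideanLin ((1 : Matrix (Fin dA) (Fin dA) ℂ) ⊗ₖ A)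
        (Matrix.toEuclideanLin (B ⊗ₖ (1 : Matrix (Fin dB) (Fin dB) ℂ)) y)
      = Matrix.toEuclideanLin (B ⊗ₖ (1 : Matrix (Fin dB) (Fin dB) ℂ))
        (Matrix.toEuclideanLin ((1 : Matrix (Fin dA) (Fin dA) ℂ) ⊗ₖ A) y) := by
  rw [← mul_apply', ← mul_apply', ← Matrix.mul_kronecker_mul, ← Matrix.mul_kronecker_mul,
    one_mul, mul_one, one_mul, mul_one]

lemma reg_close {dA dB : ℕ} (ψ : EuclideanSpace ℂ (Fin dA × Fin dB))
    {T : Matrix (Fin dB) (Fin dB) ℂ} (hT : T.IsHermitian)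
    {U : Matrix (Fin dA) (Fin dA) ℂ} (hU : U ∈ Matrix.unitaryGroup (Fin dA) ℂ) (ε : ℝ)
    (h : ‖Matrix.toEuclideanLin ((1 : Matrix (Fin dA) (Fin dA) ℂ) ⊗ₖ T) ψ -
          Matrix.toEuclideanLin (U ⊗ₖ (1 : Matrix (Fin dB) (Fin dB) ℂ)) ψ‖ ≤ ε) :
    ‖Matrix.toEuclideanLin ((1 : Matrix (Fin dA) (Fin dA) ℂ) ⊗ₖ regularize hT) ψ -
      Matrix.toEuclideanLin ((1 : Matrix (Fin dA) (Fin dA) ℂ) ⊗ₖ T) ψ‖ ≤ ε := by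
  have hV : (hT.eigenvectorUnitary : Matrix (Fin dB) (Fin dB) ℂ) ∈
      Matrix.unitaryGroup (Fin dB) ℂ := hT.eigenvectorUnitary.2
  set V : Matrix (Fin dB) (Fin dB) ℂ := (hT.eigenvectorUnitary : Matrix (Fin dB) (Fin dB) ℂ)
    with hVdef
  set D : Matrix (Fin dB) (Fin dB) ℂ :=
    Matrix.diagonal (fun b => ((hT.eigenvalues b : ℝ) : ℂ)) with hDdef
  set S : Matrix (Fin dB) (Fin dB) ℂ :=
    Matrix.diagonal (fun b => ((sig hT b : ℝ) : ℂ)) with hSdef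
  set φ : EuclideanSpace ℂ (Fin dA × Fin dB) :=
    Matrix.toEuclideanLin ((1 : Matrix (Fin dA) (Fin dA) ℂ) ⊗ₖ star V) ψ with hφdef
  have hTeq : (1 : Matrix (Fin dA) (Fin dA) ℂ) ⊗ₖ T
      = ((1 : Matrix (Fin dA) (Fin dA) ℂ) ⊗ₖ V) * ((1 : Matrix (Fin dA) (Fin dA) ℂ) ⊗ₖ D) *
        ((1 : Matrix (Fin dA) (Fin dA) ℂ) ⊗ₖ star V) := by
    rw [← conj_kron, ← spectral' hT]
  have hReq : (1 : Matrix (Fin dA) (Fin dA) ℂ) ⊗ₖ regularize hT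
      = ((1 : Matrix (Fin dA) (Fin dA) ℂ) ⊗ₖ V) * ((1 : Matrix (Fin dA) (Fin dA) ℂ) ⊗ₖ S) *
        ((1 : Matrix (Fin dA) (Fin dA) ℂ) ⊗ₖ star V) := by
    rw [← conj_kron, ← regularize_eq hT]
  have hUeq : U ⊗ₖ (1 : Matrix (Fin dB) (Fin dB) ℂ)
      = ((1 : Matrix (Fin dA) (Fin dA) ℂ) ⊗ₖ V) * (U ⊗ₖ (1 : Matrix (Fin dB) (Fin dB) ℂ)) *
        ((1 : Matrix (Fin dA) (Fin dA) ℂ) ⊗ₖ star V) := by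
    rw [← Matrix.mul_kronecker_mul, ← Matrix.mul_kronecker_mul, one_mul, mul_one, mul_one,
      Matrix.mem_unitaryGroup_iff.mp hV]
  have hVk : ((1 : Matrix (Fin dA) (Fin dA) ℂ) ⊗ₖ V) ∈
      Matrix.unitaryGroup (Fin dA × Fin dB) ℂ := kron_unitary (one_mem _) hV
  have e1 : Matrix.toEuclideanLin ((1 : Matrix (Fin dA) (Fin dA) ℂ) ⊗ₖ regularize hT) ψ -
        Matrix.toEuclideanLin ((1 : Matrix (Fin dA) (Fin dA) ℂ) ⊗ₖ T) ψ
      = Matrix.toEuclideanLin ((1 : Matrix (Fin dA) (Fin dA) ℂ) ⊗ₖ V)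
        (Matrix.toEuclideanLin ((1 : Matrix (Fin dA) (Fin dA) ℂ) ⊗ₖ S) φ -
         Matrix.toEuclideanLin ((1 : Matrix (Fin dA) (Fin dA) ℂ) ⊗ₖ D) φ) := by
    rw [map_sub, hReq, hTeq, mul_apply', mul_apply', mul_apply', mul_apply']
  have e2 : Matrix.toEuclideanLin ((1 : Matrix (Fin dA) (Fin dA) ℂ) ⊗ₖ T) ψ -
        Matrix.toEuclideanLin (U ⊗ₖ (1 : Matrix (Fin dB) (Fin dB) ℂ)) ψ
      = Matrix.toEuclideanLin ((1 : Matrix (Fin dA) (Fin dA) ℂ) ⊗ₖ V)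
        (Matrix.toEuclideanLin ((1 : Matrix (Fin dA) (Fin dA) ℂ) ⊗ₖ D) φ -
         Matrix.toEuclideanLin (U ⊗ₖ (1 : Matrix (Fin dB) (Fin dB) ℂ)) φ) := by
    have hu : Matrix.toEuclideanLin (U ⊗ₖ (1 : Matrix (Fin dB) (Fin dB) ℂ)) ψ
        = Matrix.toEuclideanLin ((1 : Matrix (Fin dA) (Fin dA) ℂ) ⊗ₖ V)
          (Matrix.toEuclideanLin (U ⊗ₖ (1 : Matrix (Fin dB) (Fin dB) ℂ)) φ) := by
      rw [hφdef, ← mul_apply', ← mul_apply', ← hUeq]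
    rw [map_sub, hTeq, mul_apply', mul_apply', hu]
  calc ‖Matrix.toEuclideanLin ((1 : Matrix (Fin dA) (Fin dA) ℂ) ⊗ₖ regularize hT) ψ -
        Matrix.toEuclideanLin ((1 : Matrix (Fin dA) (Fin dA) ℂ) ⊗ₖ T) ψ‖
      = ‖Matrix.toEuclideanLin ((1 : Matrix (Fin dA) (Fin dA) ℂ) ⊗ₖ S) φ -
         Matrix.toEuclideanLin ((1 : Matrix (Fin dA) (Fin dA) ℂ) ⊗ₖ D) φ‖ := by
        rw [e1, unit_norm hVk]
    _ ≤ ‖Matrix.toEuclideanLin ((1 : Matrix (Fin dA) (Fin dA) ℂ) ⊗ₖ D) φ -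
         Matrix.toEuclideanLin (U ⊗ₖ (1 : Matrix (Fin dB) (Fin dB) ℂ)) φ‖ :=
        diag_key hT.eigenvalues (sig hT) (fun b => sign_dist (hT.eigenvalues b)) hU φ
    _ = ‖Matrix.toEuclideanLin ((1 : Matrix (Fin dA) (Fin dA) ℂ) ⊗ₖ T) ψ -
         Matrix.toEuclideanLin (U ⊗ₖ (1 : Matrix (Fin dB) (Fin dB) ℂ)) ψ‖ := by
        rw [e2, unit_norm hVk]
    _ ≤ ε := h

lemma prod_close {dA dB : ℕ} (ψ : EuclideanSpace ℂ (Fin dA × Fin dB))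
    {T₁ T₂ : Matrix (Fin dB) (Fin dB) ℂ} (hT₁ : T₁.IsHermitian) (hT₂ : T₂.IsHermitian)
    {U₂ : Matrix (Fin dA) (Fin dA) ℂ} (hU₂ : U₂ ∈ Matrix.unitaryGroup (Fin dA) ℂ) (ε : ℝ)
    (h₁R : ‖Matrix.toEuclideanLin ((1 : Matrix (Fin dA) (Fin dA) ℂ) ⊗ₖ regularize hT₁) ψ -
        Matrix.toEuclideanLin ((1 : Matrix (Fin dA) (Fin dA) ℂ) ⊗ₖ T₁) ψ‖ ≤ ε)
    (h₂R : ‖Matrix.toEuclideanLin ((1 : Matrix (Fin dA) (Fin dA) ℂ) ⊗ₖ regularize hT₂) ψ -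
        Matrix.toEuclideanLin ((1 : Matrix (Fin dA) (Fin dA) ℂ) ⊗ₖ T₂) ψ‖ ≤ ε)
    (h₂ : ‖Matrix.toEuclideanLin ((1 : Matrix (Fin dA) (Fin dA) ℂ) ⊗ₖ T₂) ψ -
          Matrix.toEuclideanLin (U₂ ⊗ₖ (1 : Matrix (Fin dB) (Fin dB) ℂ)) ψ‖ ≤ ε) :
    ‖Matrix.toEuclideanLin ((1 : Matrix (Fin dA) (Fin dA) ℂ) ⊗ₖ
          (regularize hT₁ * regularize hT₂)) ψ -
        Matrix.toEuclideanLin ((1 : Matrix (Fin dA) (Fin dA) ℂ) ⊗ₖ (T₁ * T₂)) ψ‖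
      ≤ (3 + ‖Matrix.toEuclideanCLM (𝕜 := ℂ) T₁‖) * ε := by
  have kron_mul : ∀ M N : Matrix (Fin dB) (Fin dB) ℂ,
      (1 : Matrix (Fin dA) (Fin dA) ℂ) ⊗ₖ (M * N)
        = ((1 : Matrix (Fin dA) (Fin dA) ℂ) ⊗ₖ M) * ((1 : Matrix (Fin dA) (Fin dA) ℂ) ⊗ₖ N) := by
    intro M N
    rw [← Matrix.mul_kronecker_mul, one_mul]
  set x0 := Matrix.toEuclideanLin ((1 : Matrix (Fin dA) (Fin dA) ℂ) ⊗ₖ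
      (regularize hT₁ * regularize hT₂)) ψ
  set m1 := Matrix.toEuclideanLin ((1 : Matrix (Fin dA) (Fin dA) ℂ) ⊗ₖ regularize hT₁)
      (Matrix.toEuclideanLin ((1 : Matrix (Fin dA) (Fin dA) ℂ) ⊗ₖ T₂) ψ)
  set m2 := Matrix.toEuclideanLin ((1 : Matrix (Fin dA) (Fin dA) ℂ) ⊗ₖ regularize hT₁)
      (Matrix.toEuclideanLin (U₂ ⊗ₖ (1 : Matrix (Fin dB) (Fin dB) ℂ)) ψ)
  set m3 := Matrix.toEuclideanLin (U₂ ⊗ₖ (1 : Matrix (Fin dB) (Fin dB) ℂ))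
      (Matrix.toEuclideanLin ((1 : Matrix (Fin dA) (Fin dA) ℂ) ⊗ₖ T₁) ψ)
  set m4 := Matrix.toEuclideanLin ((1 : Matrix (Fin dA) (Fin dA) ℂ) ⊗ₖ (T₁ * T₂)) ψ
  have hRk : ((1 : Matrix (Fin dA) (Fin dA) ℂ) ⊗ₖ regularize hT₁) ∈
      Matrix.unitaryGroup (Fin dA × Fin dB) ℂ := kron_unitary (one_mem _) (regularize_unitary hT₁)
  have hUk : (U₂ ⊗ₖ (1 : Matrix (Fin dB) (Fin dB) ℂ)) ∈
      Matrix.unitaryGroup (Fin dA × Fin dB) ℂ := kron_unitary hU₂ (one_mem _)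
  have b1 : ‖x0 - m1‖ ≤ ε := by
    rw [show x0 = Matrix.toEuclideanLin ((1 : Matrix (Fin dA) (Fin dA) ℂ) ⊗ₖ regularize hT₁)
        (Matrix.toEuclideanLin ((1 : Matrix (Fin dA) (Fin dA) ℂ) ⊗ₖ regularize hT₂) ψ) from by
      rw [← mul_apply', ← kron_mul]]
    rw [← map_sub]
    rw [unit_norm hRk]
    exact h₂R
  have b2 : ‖m1 - m2‖ ≤ ε := by
    rw [← map_sub, unit_norm hRk]
    exact h₂
  have b3 : ‖m2 - m3‖ ≤ ε := by
    rw [show m2 = Matrix.toEuclideanLin (U₂ ⊗ₖ (1 : Matrix (Fin dB) (Fin dB) ℂ))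
        (Matrix.toEuclideanLin ((1 : Matrix (Fin dA) (Fin dA) ℂ) ⊗ₖ regularize hT₁) ψ) from
      comm_kron _ _ _]
    rw [← map_sub, unit_norm hUk]
    exact h₁R
  have b4 : ‖m3 - m4‖ ≤ ‖Matrix.toEuclideanCLM (𝕜 := ℂ) T₁‖ * ε := by
    rw [show m3 = Matrix.toEuclideanLin ((1 : Matrix (Fin dA) (Fin dA) ℂ) ⊗ₖ T₁)
        (Matrix.toEuclideanLin (U₂ ⊗ₖ (1 : Matrix (Fin dB) (Fin dB) ℂ)) ψ) from
      (comm_kron _ _ _).symm]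
    rw [show m4 = Matrix.toEuclideanLin ((1 : Matrix (Fin dA) (Fin dA) ℂ) ⊗ₖ T₁)
        (Matrix.toEuclideanLin ((1 : Matrix (Fin dA) (Fin dA) ℂ) ⊗ₖ T₂) ψ) from by
      rw [← mul_apply', ← kron_mul]]
    rw [← map_sub]
    refine le_trans (one_kron_norm_le _ _) ?_
    rw [norm_sub_rev]
    exact mul_le_mul_of_nonneg_left h₂ (norm_nonneg _)
  calc ‖x0 - m4‖ = ‖(x0 - m1) + (m1 - m2) + (m2 - m3) + (m3 - m4)‖ := by abel_nf
    _ ≤ ‖x0 - m1‖ + ‖m1 - m2‖ + ‖m2 - m3‖ + ‖m3 - m4‖ := by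
        refine le_trans (norm_add_le _ _) ?_
        gcongr
        refine le_trans (norm_add_le _ _) ?_
        gcongr
        exact norm_add_le _ _
    _ ≤ ε + ε + ε + ‖Matrix.toEuclideanCLM (𝕜 := ℂ) T₁‖ * ε := by gcongr 
    _ = (3 + ‖Matrix.toEuclideanCLM (𝕜 := ℂ) T₁‖) * ε := by ring


end RegAux


/-- if Hermitian `T₁, T₂` (on Bob's side) are `ε`-close on `ψ` to unitaries
`U₁, U₂` (on Alice's side), then the anticommutator of the regularized unitaries `T̂₁, T̂₂`
is `(6 + ‖T₁‖ + ‖T₂‖)ε`-close on `ψ` to the anticommutator of `T₁, T₂`. -/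
theorem regularized_anticommutator_close {dA dB : ℕ}
    (ψ : EuclideanSpace ℂ (Fin dA × Fin dB))
    (T₁ T₂ : Matrix (Fin dB) (Fin dB) ℂ) (hT₁ : T₁.IsHermitian) (hT₂ : T₂.IsHermitian)
    (U₁ U₂ : Matrix (Fin dA) (Fin dA) ℂ)
    (hU₁ : U₁ ∈ Matrix.unitaryGroup (Fin dA) ℂ) (hU₂ : U₂ ∈ Matrix.unitaryGroup (Fin dA) ℂ)
    (ε : ℝ)
    (h₁ : ‖Matrix.toEuclideanLin ((1 : Matrix (Fin dA) (Fin dA) ℂ) ⊗ₖ T₁) ψ -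
          Matrix.toEuclideanLin (U₁ ⊗ₖ (1 : Matrix (Fin dB) (Fin dB) ℂ)) ψ‖ ≤ ε)
    (h₂ : ‖Matrix.toEuclideanLin ((1 : Matrix (Fin dA) (Fin dA) ℂ) ⊗ₖ T₂) ψ -
          Matrix.toEuclideanLin (U₂ ⊗ₖ (1 : Matrix (Fin dB) (Fin dB) ℂ)) ψ‖ ≤ ε) :
    ‖Matrix.toEuclideanLin ((1 : Matrix (Fin dA) (Fin dA) ℂ) ⊗ₖ
          (regularize hT₁ * regularize hT₂ + regularize hT₂ * regularize hT₁)) ψ -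
        Matrix.toEuclideanLin ((1 : Matrix (Fin dA) (Fin dA) ℂ) ⊗ₖ (T₁ * T₂ + T₂ * T₁)) ψ‖ ≤
      (6 + ‖Matrix.toEuclideanCLM (𝕜 := ℂ) T₁‖ + ‖Matrix.toEuclideanCLM (𝕜 := ℂ) T₂‖) * ε := by
  have h₁R := RegAux.reg_close ψ hT₁ hU₁ ε h₁
  have h₂R := RegAux.reg_close ψ hT₂ hU₂ ε h₂
  have p12 := RegAux.prod_close ψ hT₁ hT₂ hU₂ ε h₁R h₂R h₂
  have p21 := RegAux.prod_close ψ hT₂ hT₁ hU₁ ε h₂R h₁R h₁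
  have split : ∀ M N : Matrix (Fin dB) (Fin dB) ℂ,
      Matrix.toEuclideanLin ((1 : Matrix (Fin dA) (Fin dA) ℂ) ⊗ₖ (M + N)) ψ
        = Matrix.toEuclideanLin ((1 : Matrix (Fin dA) (Fin dA) ℂ) ⊗ₖ M) ψ +
          Matrix.toEuclideanLin ((1 : Matrix (Fin dA) (Fin dA) ℂ) ⊗ₖ N) ψ := by
    intro M N
    rw [Matrix.kronecker_add, map_add, LinearMap.add_apply]
  rw [split, split]
  have key : ∀ a b c d : EuclideanSpace ℂ (Fin dA × Fin dB),
      ‖(a + b) - (c + d)‖ ≤ ‖a - c‖ + ‖b - d‖ := by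
    intro a b c d
    rw [show (a + b) - (c + d) = (a - c) + (b - d) from by abel]
    exact norm_add_le _ _
  refine le_trans (key _ _ _ _) ?_
  calc ‖Matrix.toEuclideanLin ((1 : Matrix (Fin dA) (Fin dA) ℂ) ⊗ₖ
          (regularize hT₁ * regularize hT₂)) ψ -
        Matrix.toEuclideanLin ((1 : Matrix (Fin dA) (Fin dA) ℂ) ⊗ₖ (T₁ * T₂)) ψ‖ +
      ‖Matrix.toEuclideanLin ((1 : Matrix (Fin dA) (Fin dA) ℂ) ⊗ₖ
          (regularize hT₂ * regularize hT₁)) ψ -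
        Matrix.toEuclideanLin ((1 : Matrix (Fin dA) (Fin dA) ℂ) ⊗ₖ (T₂ * T₁)) ψ‖
      ≤ (3 + ‖Matrix.toEuclideanCLM (𝕜 := ℂ) T₁‖) * ε +
        (3 + ‖Matrix.toEuclideanCLM (𝕜 := ℂ) T₂‖) * ε := add_le_add p12 p21
    _ = (6 + ‖Matrix.toEuclideanCLM (𝕜 := ℂ) T₁‖ + ‖Matrix.toEuclideanCLM (𝕜 := ℂ) T₂‖) * ε := by
        ring
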